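/- Let F, C : ℕ × ℕ → ℂ be doubly indexed families of complex numbers related by F(n, m) = Σ_{k=0}^{min(n,m)} C(n-k, m-k) · √([n]_q! [m]_q!) / [k]_q! for all n, m ∈ ℕ (this is the relation between the Fock-space matrix elements F(n,m) = ⟨n|F|m⟩ of a normal-ordered operator F = Σ_{p,s} C(p,s) (a†)^p a^s and its normal-order coefficients). Then the coefficients are recovered by the inversion formula C(p, s) = Σ_{k=0}^{min(p,s)} (-1)^k q^{k(k-1)/2} / ([k]_q! √([p-k]_q! [s-k]_q!)) · F(p-k, s-k) for all p, s ∈ ℕ. -/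

import Mathlib

open scoped BigOperators

/-- The q-number `[n]_q = (1 - q^n)/(1 - q)`. -/
noncomputable def qnum (q : ℝ) (n : ℕ) : ℝ := (1 - q ^ n) / (1 - q)

/-- The q-factorial `[n]_q! = [1]_q [2]_q ⋯ [n]_q`, with `[0]_q! = 1`. -/
noncomputable def qfact (q : ℝ) : ℕ → ℝ
  | 0 => 1
  | n + 1 => qfact q n * qnum q (n + 1)

section Aux

variable {q : ℝ}

lemma qnum_pos (hq0 : 0 < q) (hq1 : q < 1) {n : ℕ} (hn : 1 ≤ n) : 0 < qnum q n := by
  unfold qnum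
  apply div_pos
  · have : q ^ n < 1 := pow_lt_one₀ hq0.le hq1 (by omega)
    linarith
  · linarith

lemma qfact_pos (hq0 : 0 < q) (hq1 : q < 1) : ∀ n, 0 < qfact q n
  | 0 => one_pos
  | n + 1 => mul_pos (qfact_pos hq0 hq1 n) (qnum_pos hq0 hq1 (by omega))

lemma tri (k : ℕ) : (k + 1) * k / 2 = k * (k - 1) / 2 + k := by
  rcases k with _ | k
  · rfl
  · have h : (k + 1 + 1) * (k + 1) = (k + 1) * k + 2 * (k + 1) := by ring
    rw [Nat.succ_sub_one]
    omega

lemma qnum_split (hq1 : q < 1) {n k : ℕ} (hk : k ≤ n) :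
    qnum q n = qnum q (n - k) + q ^ (n - k) * qnum q k := by
  have h1q : (1 : ℝ) - q ≠ 0 := by linarith
  have hpow : q ^ (n - k) * q ^ k = q ^ n := by
    rw [← pow_add]; congr 1; omega
  unfold qnum
  field_simp
  linarith [hpow]

lemma qnum_zero : qnum q 0 = 0 := by simp [qnum]

/-- Recurrence for the alternating q-binomial sum. -/
lemma Hrec (hq0 : 0 < q) (hq1 : q < 1) (n : ℕ) :
    qnum q (n + 1) * ∑ k ∈ Finset.range (n + 2),
        (-1 : ℝ) ^ k * q ^ (k * (k - 1) / 2) / (qfact q k * qfact q (n + 1 - k))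
      = (1 - q ^ n) * ∑ k ∈ Finset.range (n + 1),
        (-1 : ℝ) ^ k * q ^ (k * (k - 1) / 2) / (qfact q k * qfact q (n - k)) := by
  have hf : ∀ j, qfact q j ≠ 0 := fun j => (qfact_pos hq0 hq1 j).ne'
  have hqn : ∀ j, 1 ≤ j → qnum q j ≠ 0 := fun j hj => (qnum_pos hq0 hq1 hj).ne'
  rw [Finset.mul_sum]
  have split : ∀ k ∈ Finset.range (n + 2),
      qnum q (n + 1) * ((-1 : ℝ) ^ k * q ^ (k * (k - 1) / 2) / (qfact q k * qfact q (n + 1 - k)))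
        = (-1 : ℝ) ^ k * q ^ (k * (k - 1) / 2) * qnum q (n + 1 - k)
              / (qfact q k * qfact q (n + 1 - k))
          + (-1 : ℝ) ^ k * q ^ (k * (k - 1) / 2) * (q ^ (n + 1 - k) * qnum q k)
              / (qfact q k * qfact q (n + 1 - k)) := by
    intro k hk
    rw [Finset.mem_range] at hk
    rw [qnum_split hq1 (show k ≤ n + 1 by omega)]
    ring
  rw [Finset.sum_congr rfl split, Finset.sum_add_distrib]
  have hA : ∑ k ∈ Finset.range (n + 2),
      (-1 : ℝ) ^ k * q ^ (k * (k - 1) / 2) * qnum q (n + 1 - k)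
        / (qfact q k * qfact q (n + 1 - k))
      = ∑ k ∈ Finset.range (n + 1),
        (-1 : ℝ) ^ k * q ^ (k * (k - 1) / 2) / (qfact q k * qfact q (n - k)) := by
    rw [Finset.sum_range_succ, Nat.sub_self, qnum_zero]
    rw [mul_zero, zero_div, add_zero]
    refine Finset.sum_congr rfl fun k hk => ?_
    rw [Finset.mem_range] at hk
    rw [show n + 1 - k = (n - k) + 1 by omega]
    rw [show qfact q ((n - k) + 1) = qfact q (n - k) * qnum q ((n - k) + 1) from rfl]
    have h1 := hf k; have h2 := hf (n - k); have h3 := hqn ((n - k) + 1) (by omega)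
    field_simp
  have hB : ∑ k ∈ Finset.range (n + 2),
      (-1 : ℝ) ^ k * q ^ (k * (k - 1) / 2) * (q ^ (n + 1 - k) * qnum q k)
        / (qfact q k * qfact q (n + 1 - k))
      = -(q ^ n * ∑ k ∈ Finset.range (n + 1),
        (-1 : ℝ) ^ k * q ^ (k * (k - 1) / 2) / (qfact q k * qfact q (n - k))) := by
    rw [Finset.sum_range_succ']
    rw [qnum_zero, mul_zero, mul_zero, zero_div, add_zero, Finset.mul_sum, ← Finset.sum_neg_distrib]
    refine Finset.sum_congr rfl fun k hk => ?_
    rw [Finset.mem_range] at hk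
    rw [show n + 1 - (k + 1) = n - k by omega]
    rw [show qfact q (k + 1) = qfact q k * qnum q (k + 1) from rfl]
    rw [pow_succ (-1 : ℝ) k,
      show (k + 1) * (k + 1 - 1) / 2 = k * (k - 1) / 2 + k from by
        rw [Nat.add_sub_cancel]; exact tri k,
      pow_add (q) (k * (k - 1) / 2) k]
    have h1 := hf k; have h2 := hf (n - k); have h3 := hqn (k + 1) (by omega)
    have hpow : q ^ k * q ^ (n - k) = q ^ n := by
      rw [← pow_add]; congr 1; omega
    field_simp
    linear_combination (-1 : ℝ) * hpow
  rw [hA, hB]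
  ring

/-- The key orthogonality: the alternating q-binomial sum vanishes for `N ≥ 1`. -/
lemma key (hq0 : 0 < q) (hq1 : q < 1) : ∀ N : ℕ, 1 ≤ N →
    ∑ k ∈ Finset.range (N + 1),
      (-1 : ℝ) ^ k * q ^ (k * (k - 1) / 2) / (qfact q k * qfact q (N - k)) = 0 := by
  have step : ∀ n : ℕ, (1 - q ^ n) * ∑ k ∈ Finset.range (n + 1),
      (-1 : ℝ) ^ k * q ^ (k * (k - 1) / 2) / (qfact q k * qfact q (n - k)) = 0 →
      ∑ k ∈ Finset.range (n + 2),
        (-1 : ℝ) ^ k * q ^ (k * (k - 1) / 2) / (qfact q k * qfact q (n + 1 - k)) = 0 := by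
    intro n h
    have h2 := Hrec hq0 hq1 n
    rw [h] at h2
    exact (mul_eq_zero.1 h2).resolve_left (qnum_pos hq0 hq1 (by omega)).ne'
  intro N hN
  induction N with
  | zero => omega
  | succ n ih =>
    rcases Nat.eq_zero_or_pos n with hn | hn
    · subst hn
      exact step 0 (by simp)
    · exact step n (by rw [ih hn]; ring)

/-- Triangle sum reindexing. -/
lemma sum_triangle {M : Type*} [AddCommMonoid M] (m : ℕ) (g : ℕ → ℕ → M) :
    ∑ k ∈ Finset.range (m + 1), ∑ j ∈ Finset.range (m - k + 1), g k j
      = ∑ N ∈ Finset.range (m + 1), ∑ k ∈ Finset.range (N + 1), g k (N - k) := by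
  rw [Finset.sum_sigma', Finset.sum_sigma']
  refine Finset.sum_nbij' (fun x => ⟨x.1 + x.2, x.1⟩) (fun x => ⟨x.2, x.1 - x.2⟩)
    ?_ ?_ ?_ ?_ ?_
  · rintro ⟨a, b⟩ hab
    simp only [Finset.mem_sigma, Finset.mem_range] at hab ⊢
    omega
  · rintro ⟨a, b⟩ hab
    simp only [Finset.mem_sigma, Finset.mem_range] at hab ⊢
    omega
  · rintro ⟨a, b⟩ hab
    have h : a + b - a = b := by omega
    simp [h]
  · rintro ⟨a, b⟩ hab
    simp only [Finset.mem_sigma, Finset.mem_range] at hab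
    have h : b + (a - b) = a := by omega
    simp [h]
  · rintro ⟨a, b⟩ hab
    simp only
    rw [show a + b - a = b by omega]

end Aux

/-- if the Fock-space matrix elements `F(n,m)` of a normal-ordered operator
are related to its normal-order coefficients `C(p,s)` by
`F(n,m) = ∑_{k=0}^{min(n,m)} C(n-k, m-k) √([n]_q! [m]_q!)/[k]_q!`, then the coefficients
are recovered by
`C(p,s) = ∑_{k=0}^{min(p,s)} (-1)^k q^{k(k-1)/2}/([k]_q! √([p-k]_q! [s-k]_q!)) F(p-k, s-k)`. -/
theorem normal_order_coefficients_inversion (q : ℝ) (hq0 : 0 < q) (hq1 : q < 1)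
    (F C : ℕ → ℕ → ℂ)
    (hFC : ∀ n m : ℕ, F n m = ∑ k ∈ Finset.range (min n m + 1),
      C (n - k) (m - k) *
        ((Real.sqrt (qfact q n * qfact q m) / qfact q k : ℝ) : ℂ)) :
    ∀ p s : ℕ, C p s = ∑ k ∈ Finset.range (min p s + 1),
      (((-1 : ℝ) ^ k * q ^ (k * (k - 1) / 2) /
          (qfact q k * Real.sqrt (qfact q (p - k) * qfact q (s - k))) : ℝ) : ℂ) *
        F (p - k) (s - k) := by
  intro p s
  have hf : ∀ j, (0 : ℝ) < qfact q j := qfact_pos hq0 hq1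
  have hfne : ∀ j, qfact q j ≠ 0 := fun j => (hf j).ne'
  have hsq : ∀ a b : ℕ, Real.sqrt (qfact q a * qfact q b) ≠ 0 :=
    fun a b => (Real.sqrt_pos.mpr (mul_pos (hf a) (hf b))).ne'
  symm
  have step1 : ∀ k ∈ Finset.range (min p s + 1),
      (((-1 : ℝ) ^ k * q ^ (k * (k - 1) / 2) /
          (qfact q k * Real.sqrt (qfact q (p - k) * qfact q (s - k))) : ℝ) : ℂ) *
        F (p - k) (s - k)
      = ∑ j ∈ Finset.range (min p s - k + 1),
          (((-1 : ℝ) ^ k * q ^ (k * (k - 1) / 2) / (qfact q k * qfact q j) : ℝ) : ℂ) *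
            C (p - (k + j)) (s - (k + j)) := by
    intro k hk
    rw [Finset.mem_range] at hk
    rw [hFC (p - k) (s - k), show min (p - k) (s - k) = min p s - k by omega, Finset.mul_sum]
    refine Finset.sum_congr rfl fun j hj => ?_
    rw [show p - k - j = p - (k + j) by omega, show s - k - j = s - (k + j) by omega]
    rw [mul_comm (C _ _) _, ← mul_assoc, ← Complex.ofReal_mul]
    congr 2
    have h1 := hfne k; have h2 := hfne j; have h3 := hsq (p - k) (s - k)
    field_simp
  rw [Finset.sum_congr rfl step1]
  rw [sum_triangle (min p s) (fun k j =>
      (((-1 : ℝ) ^ k * q ^ (k * (k - 1) / 2) / (qfact q k * qfact q j) : ℝ) : ℂ) *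
        C (p - (k + j)) (s - (k + j)))]
  have step2 : ∀ N ∈ Finset.range (min p s + 1),
      (∑ k ∈ Finset.range (N + 1),
        (((-1 : ℝ) ^ k * q ^ (k * (k - 1) / 2) / (qfact q k * qfact q (N - k)) : ℝ) : ℂ) *
          C (p - (k + (N - k))) (s - (k + (N - k))))
      = ((∑ k ∈ Finset.range (N + 1),
          ((-1 : ℝ) ^ k * q ^ (k * (k - 1) / 2) / (qfact q k * qfact q (N - k))) : ℝ) : ℂ) *
          C (p - N) (s - N) := by
    intro N _
    rw [Complex.ofReal_sum, Finset.sum_mul]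
    refine Finset.sum_congr rfl fun k hk => ?_
    rw [Finset.mem_range] at hk
    rw [show k + (N - k) = N by omega]
  rw [Finset.sum_congr rfl step2]
  rw [Finset.sum_eq_single 0]
  · norm_num [qfact]
  · intro N hN hN0
    rw [key hq0 hq1 N (by omega)]
    simp
  · intro h
    exact absurd (Finset.mem_range.mpr (by omega)) h
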